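/- Let d ≥ 1, let x be uniformly distributed on {−1, 1}^d, and let A be a d×d real orthogonal matrix with columns a_1, ..., a_d. Then for every u ∈ ℝ^d, E[⟨u, Ax⟩⁴] = 3‖u‖⁴ − 2∑_{i=1}^d ⟨a_i, u⟩⁴. Equivalently, (1/2)(3‖u‖⁴ − E[⟨u, Ax⟩⁴]) = ∑_{i=1}^d ⟨a_i, u⟩⁴ = T(u,u,u,u), where T = ∑_{i=1}^d a_i^{⊗4}. -/

import Mathlib

open Matrix

open Finset in
lemma key2 (n : ℕ) (c : Fin n → ℝ) :
    ∑ s : Fin n → Bool, (∑ i, c i * (if s i then (1:ℝ) else -1)) ^ 2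
      = 2 ^ n * ∑ i, c i ^ 2 := by
  induction n with
  | zero => simp
  | succ n ih =>
    rw [← (Fin.consEquiv (fun _ : Fin (n+1) => Bool)).sum_comp, Fintype.sum_prod_type]
    simp only [Fin.consEquiv_apply, Fintype.sum_bool, Fin.sum_univ_succ, Fin.cons_zero,
      Fin.cons_succ, if_true, if_false, Bool.false_eq_true, mul_one, mul_neg]
    rw [← Finset.sum_add_distrib]
    have : ∀ t : Fin n → Bool,
        (c 0 + ∑ i, c i.succ * (if t i then (1:ℝ) else -1)) ^ 2
        + (-c 0 + ∑ i, c i.succ * (if t i then (1:ℝ) else -1)) ^ 2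
        = 2 * c 0 ^ 2 + 2 * (∑ i, c i.succ * (if t i then (1:ℝ) else -1)) ^ 2 := by
      intro t; ring
    rw [Finset.sum_congr rfl fun t _ => this t, Finset.sum_add_distrib, Finset.sum_const,
      ← Finset.mul_sum, ih (fun i => c i.succ)]
    simp [pow_succ]
    ring

lemma key4 (n : ℕ) (c : Fin n → ℝ) :
    ∑ s : Fin n → Bool, (∑ i, c i * (if s i then (1:ℝ) else -1)) ^ 4
      = 2 ^ n * (3 * (∑ i, c i ^ 2) ^ 2 - 2 * ∑ i, c i ^ 4) := by
  induction n with
  | zero => simp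
  | succ n ih =>
    rw [← (Fin.consEquiv (fun _ : Fin (n+1) => Bool)).sum_comp, Fintype.sum_prod_type]
    simp only [Fin.consEquiv_apply, Fintype.sum_bool, Fin.sum_univ_succ, Fin.cons_zero,
      Fin.cons_succ, if_true, if_false, Bool.false_eq_true, mul_one, mul_neg]
    rw [← Finset.sum_add_distrib]
    have : ∀ t : Fin n → Bool,
        (c 0 + ∑ i, c i.succ * (if t i then (1:ℝ) else -1)) ^ 4
        + (-c 0 + ∑ i, c i.succ * (if t i then (1:ℝ) else -1)) ^ 4
        = 2 * c 0 ^ 4 + 12 * c 0 ^ 2 * (∑ i, c i.succ * (if t i then (1:ℝ) else -1)) ^ 2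
          + 2 * (∑ i, c i.succ * (if t i then (1:ℝ) else -1)) ^ 4 := by
      intro t; ring
    rw [Finset.sum_congr rfl fun t _ => this t, Finset.sum_add_distrib, Finset.sum_add_distrib,
      Finset.sum_const, ← Finset.mul_sum, ← Finset.mul_sum, key2 n (fun i => c i.succ),
      ih (fun i => c i.succ)]
    simp [pow_succ]
    ring


/-- **ICA fourth-moment identity.** Let `x` be uniform on `{−1,1}^d`
(encoded as the uniform average over `s : Fin d → Bool`) and let `A` be a `d×d`
orthogonal matrix with columns `aᵢ = A·,ᵢ`. Then for every `u`,
`E[⟨u, Ax⟩⁴] = 3‖u‖⁴ − 2∑ᵢ⟨aᵢ, u⟩⁴`; equivalently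
`(1/2)(3‖u‖⁴ − E[⟨u, Ax⟩⁴]) = ∑ᵢ⟨aᵢ, u⟩⁴ = T(u,u,u,u)` for `T = ∑ᵢ aᵢ^{⊗4}`. -/
theorem stmt_17 {d : ℕ} (A : Matrix (Fin d) (Fin d) ℝ) (hA : Aᵀ * A = 1)
    (u : Fin d → ℝ) :
    (1 / 2 ^ d : ℝ) * ∑ s : Fin d → Bool,
        (u ⬝ᵥ A.mulVec (fun i => if s i then (1 : ℝ) else -1)) ^ 4 =
      3 * (u ⬝ᵥ u) ^ 2 - 2 * ∑ i, ((fun j => A j i) ⬝ᵥ u) ^ 4 ∧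
    (1 / 2 : ℝ) * (3 * (u ⬝ᵥ u) ^ 2 -
        (1 / 2 ^ d : ℝ) * ∑ s : Fin d → Bool,
          (u ⬝ᵥ A.mulVec (fun i => if s i then (1 : ℝ) else -1)) ^ 4) =
      ∑ i, ((fun j => A j i) ⬝ᵥ u) ^ 4 := by
  set c : Fin d → ℝ := fun i => (fun j => A j i) ⬝ᵥ u with hc
  have hAAT : A * Aᵀ = 1 := mul_eq_one_comm.mp hA
  have hent : ∀ j k, ∑ i, A j i * A k i = if j = k then (1:ℝ) else 0 := by
    intro j k
    have := congrFun (congrFun hAAT j) k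
    simpa [Matrix.mul_apply, Matrix.one_apply, Matrix.transpose_apply] using this
  have hdot : ∀ s : Fin d → Bool,
      u ⬝ᵥ A.mulVec (fun i => if s i then (1:ℝ) else -1)
        = ∑ i, c i * (if s i then (1:ℝ) else -1) := by
    intro s
    simp only [hc, dotProduct, Matrix.mulVec, Finset.mul_sum, Finset.sum_mul]
    rw [Finset.sum_comm]
    exact Finset.sum_congr rfl fun i _ => Finset.sum_congr rfl fun j _ => by ring
  have hnorm : ∑ i, c i ^ 2 = u ⬝ᵥ u := by
    simp only [hc, dotProduct]
    calc ∑ i, (∑ j, A j i * u j) ^ 2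
        = ∑ i, ∑ j, ∑ k, (A j i * u j) * (A k i * u k) := by
          refine Finset.sum_congr rfl fun i _ => ?_
          rw [sq, Finset.sum_mul_sum]
      _ = ∑ j, ∑ k, (u j * u k) * ∑ i, A j i * A k i := by
          rw [Finset.sum_comm]
          refine Finset.sum_congr rfl fun j _ => ?_
          rw [Finset.sum_comm]
          refine Finset.sum_congr rfl fun k _ => ?_
          rw [Finset.mul_sum]
          exact Finset.sum_congr rfl fun i _ => by ring
      _ = ∑ j, u j * u j := by
          refine Finset.sum_congr rfl fun j _ => ?_
          rw [Finset.sum_eq_single j]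
          · simp [hent]
          · intro k _ hk; simp [hent, hk.symm]
          · simp
  have hsum : ∑ s : Fin d → Bool,
      (u ⬝ᵥ A.mulVec (fun i => if s i then (1:ℝ) else -1)) ^ 4
        = 2 ^ d * (3 * (u ⬝ᵥ u) ^ 2 - 2 * ∑ i, c i ^ 4) := by
    rw [Finset.sum_congr rfl fun s _ => by rw [hdot s], key4 d c, hnorm]
  have h2 : (2:ℝ) ^ d ≠ 0 := by positivity
  have hpows : ∑ i, ((fun j => A j i) ⬝ᵥ u) ^ 4 = ∑ i, c i ^ 4 := rfl
  constructor
  · rw [hsum, hpows]; field_simp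
  · rw [hsum, hpows]; field_simp; ring
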